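/- For every natural number n and every l ∈ {0,1,2,3,4,5}, there exists a triangle-free finite simple graph G with |G| > n, exactly l vertices of degree 1, ρ_G^3 = 3, and no equitable 3-coloring. -/

import Mathlib

open SimpleGraph

variable {V : Type*}

/-- `n mod* k`: the unique `m ∈ {1,…,k}` with `n ≡ m (mod k)`. -/
def modStar (n k : ℕ) : ℕ := if n % k = 0 then k else n % k

/-- The degree of vertex `v` in `G`. -/
noncomputable def deg (G : SimpleGraph V) (v : V) : ℕ := Set.ncard {u | G.Adj v u}

/-- The number of edges of the induced subgraph `G[A]`. -/
noncomputable def edgesWithin (G : SimpleGraph V) (A : Finset V) : ℕ :=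
  Set.ncard {e : Sym2 V | e ∈ G.edgeSet ∧ ∀ v ∈ e, v ∈ A}

/-- The number of vertices of degree 1 in `G`. -/
noncomputable def V1count (G : SimpleGraph V) : ℕ := Set.ncard {v | deg G v = 1}

/-- `f` is a strongly equitable (SE) `L`-coloring of the induced subgraph `G[W]`:
a proper coloring from the lists in which every color class has at most
`⌈|W|/k⌉` vertices and at most `|W| mod* k` color classes are full. -/
def IsSEColoringOn [Fintype V] [DecidableEq V] (G : SimpleGraph V) (k : ℕ)
    (L : V → Finset ℕ) (W : Finset V) (f : V → ℕ) : Prop :=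
  (∀ v ∈ W, f v ∈ L v) ∧
  (∀ u ∈ W, ∀ v ∈ W, G.Adj u v → f u ≠ f v) ∧
  (∀ c : ℕ, (W.filter fun v => f v = c).card ≤ (W.card + k - 1) / k) ∧
  ((W.image f).filter fun c => (W.filter fun v => f v = c).card = (W.card + k - 1) / k).card
    ≤ modStar W.card k

/-- `G` is strongly equitably `k`-choosable. -/
def SEChoosable [Fintype V] [DecidableEq V] (G : SimpleGraph V) (k : ℕ) : Prop :=
  ∀ L : V → Finset ℕ, (∀ v, (L v).card = k) → ∃ f : V → ℕ, IsSEColoringOn G k L Finset.univ f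

/-- `S` is safe in `G[U]` (w.r.t. the `k`-list assignment `L`): every SE `L`-coloring of
`G[U] − S` extends to an SE `L`-coloring of `G[U]`. -/
def SafeIn [Fintype V] [DecidableEq V] (G : SimpleGraph V) (k : ℕ)
    (L : V → Finset ℕ) (U S : Finset V) : Prop :=
  ∀ f : V → ℕ, IsSEColoringOn G k L (U \ S) f →
    ∃ g : V → ℕ, (∀ v ∈ U \ S, g v = f v) ∧ IsSEColoringOn G k L U g

/-- The potential `ρ_G^k(A)` (for `k ∈ {3,4}`). -/
noncomputable def rhoA (G : SimpleGraph V) (k : ℕ) (A : Finset V) : ℤ :=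
  (if k = 3 then 6 else 4) * (edgesWithin G A : ℤ) - (if k = 3 then 7 else 5) * (A.card : ℤ)
    + (if k = 3 then 3 else 2) * (Set.ncard {v | v ∈ A ∧ deg G v = 1} : ℤ)

/-- `ρ_G^k`: the maximum of `ρ_G^k(A)` over all `A ⊆ V(G)`. -/
noncomputable def rhoMax [Fintype V] [DecidableEq V] (G : SimpleGraph V) (k : ℕ) : ℤ :=
  ((Finset.univ : Finset (Finset V)).image (rhoA G k)).max'
    (Finset.image_nonempty.mpr ⟨∅, Finset.mem_univ ∅⟩)

/-- `σ_G^k`: `|V_1(G)| mod 2` if `k = 4`, and `0` if `k = 3`. -/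
noncomputable def sigmaK (G : SimpleGraph V) (k : ℕ) : ℤ :=
  if k = 4 then ((V1count G % 2 : ℕ) : ℤ) else 0

/-- `(G, L)` is a minimal counterexample for `k`: `L` is a `k`-list assignment,
`ρ_G^k ≤ 2 − σ_G^k`, `G` has no SE `L`-coloring, and every smaller graph (measured by
`|H| + |V_1(H)|`) satisfying the potential condition is SE colorable from every
`k`-list assignment. -/
def MinCounterexample [Fintype V] [DecidableEq V] (G : SimpleGraph V) (k : ℕ)
    (L : V → Finset ℕ) : Prop :=
  (∀ v, (L v).card = k) ∧
  rhoMax G k ≤ 2 - sigmaK G k ∧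
  (¬ ∃ f : V → ℕ, IsSEColoringOn G k L Finset.univ f) ∧
  ∀ (m : ℕ) (H : SimpleGraph (Fin m)) (L' : Fin m → Finset ℕ),
    (∀ v, (L' v).card = k) →
    rhoMax H k ≤ 2 - sigmaK H k →
    m + V1count H < Fintype.card V + V1count G →
    ∃ f : Fin m → ℕ, IsSEColoringOn H k L' Finset.univ f

/-- `B` is a bug in `G` with root `r`: a connected induced subgraph in which every
vertex other than possibly `r` has degree at most 2 in `G`. -/
def IsBug (G : SimpleGraph V) (B : Finset V) (r : V) : Prop :=
  r ∈ B ∧ (G.induce (↑B : Set V)).Connected ∧ ∀ v ∈ B, v ≠ r → deg G v ≤ 2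

/-- The closed neighborhood `N[B]`. -/
def closedNbhd (G : SimpleGraph V) (B : Finset V) : Set V :=
  {v | v ∈ B ∨ ∃ u ∈ B, G.Adj u v}

/-- `λ_B`: the number of plain 2-threads `P` with `r ∈ P ⊆ N[B]`; such a thread
`s x y a` is recorded by its middle edge `s(x, y)`. -/
noncomputable def lambdaB (G : SimpleGraph V) (B : Finset V) (r : V) : ℕ :=
  Set.ncard {e : Sym2 V | ∃ s x y a : V, e = s(x, y) ∧
    3 ≤ deg G s ∧ deg G x ≤ 2 ∧ deg G y ≤ 2 ∧ 3 ≤ deg G a ∧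
    G.Adj s x ∧ G.Adj x y ∧ G.Adj y a ∧ s ≠ a ∧
    r ∈ ({s, x, y, a} : Set V) ∧
    s ∈ closedNbhd G B ∧ x ∈ closedNbhd G B ∧ y ∈ closedNbhd G B ∧ a ∈ closedNbhd G B}

/-- `v` is a body vertex for root `r`: `v ≠ r` and `v` lies on a loose or closed
thread ending at `r`. -/
def IsBodyVertex (G : SimpleGraph V) (r v : V) : Prop :=
  v ≠ r ∧ 3 ≤ deg G r ∧
    ((∃ (a : V) (P : G.Walk r a), P.IsPath ∧ deg G a = 1 ∧
        (∀ u ∈ P.support, u ≠ r → u ≠ a → deg G u ≤ 2) ∧ v ∈ P.support) ∨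
     (∃ P : G.Walk r r, P.IsCycle ∧
        (∀ u ∈ P.support, u ≠ r → deg G u ≤ 2) ∧ v ∈ P.support))

/-- `π_B`: the number of body vertices in `B`. -/
noncomputable def piB (G : SimpleGraph V) (B : Finset V) (r : V) : ℕ :=
  Set.ncard {v | v ∈ B ∧ IsBodyVertex G r v}

/-- A wishbone: a bug `B` with root `r ∈ V_k(G)`, `d_B(r) = d_G(r)`, `|B| = k+1`,
`λ_B = 0` and `π_B = 2`. -/
def IsWishbone [Fintype V] (G : SimpleGraph V) (k : ℕ) (B : Finset V) (r : V) : Prop :=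
  IsBug G B r ∧ deg G r = k ∧ (∀ u, G.Adj r u → u ∈ B) ∧
    B.card = k + 1 ∧ lambdaB G B r = 0 ∧ piB G B r = 2

/-- A jellyfish: a bug `B` with root `r ∈ V_k(G)`, `d_B(r) = d_G(r)`, `|B| = k+1`,
`λ_B = 0` and `π_B = 1`. -/
def IsJellyfish [Fintype V] (G : SimpleGraph V) (k : ℕ) (B : Finset V) (r : V) : Prop :=
  IsBug G B r ∧ deg G r = k ∧ (∀ u, G.Adj r u → u ∈ B) ∧
    B.card = k + 1 ∧ lambdaB G B r = 0 ∧ piB G B r = 1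

/-- `B` is a maximal bug with root `r`. -/
def IsMaximalBug (G : SimpleGraph V) (B : Finset V) (r : V) : Prop :=
  IsBug G B r ∧ ∀ B' : Finset V, IsBug G B' r → B ⊆ B' → B' = B

/-- A fork: a maximal bug `B = B(r)` with root `r` of degree `k−1` or `k`,
`|B| = d(r) + 2`, `λ_B = 1` and `π_B = 0`. -/
def IsFork (G : SimpleGraph V) (k : ℕ) (B : Finset V) (r : V) : Prop :=
  IsMaximalBug G B r ∧ (deg G r = k - 1 ∨ deg G r = k) ∧
    B.card = deg G r + 2 ∧ lambdaB G B r = 1 ∧ piB G B r = 0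

/-- `X`: the union of all extreme sets of `G` (w.r.t. `ρ_G^k`). -/
noncomputable def extremeUnion [Fintype V] [DecidableEq V] (G : SimpleGraph V) (k : ℕ) : Set V :=
  {v | ∃ A : Finset V, A.Nonempty ∧ rhoA G k A = rhoMax G k ∧ v ∈ A}

/-- `G` has an equitable `k`-coloring: a proper coloring with `k` colors in which the
sizes of any two color classes differ by at most 1. -/
def HasEquitableColoring [Fintype V] [DecidableEq V] (G : SimpleGraph V) (k : ℕ) : Prop :=
  ∃ f : V → Fin k, (∀ ⦃u v⦄, G.Adj u v → f u ≠ f v) ∧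
    ∀ c₁ c₂ : Fin k,
      (Finset.univ.filter fun v => f v = c₁).card ≤ (Finset.univ.filter fun v => f v = c₂).card + 1

-- ==================== auxiliary development ====================
namespace Stmt4Aux

/-- model out-neighbors on a path piece of size κ plus center `none`. -/
def outM (κ : ℕ) (a : Option (Fin κ)) : Finset (Option (Fin κ)) :=
  a.elim ∅ (fun j => if h : j.val + 1 < κ then
      (if j.val = 0 then {some ⟨j.val+1, h⟩, none} else {some ⟨j.val+1, h⟩})
      else {none})

lemma outM_some {κ : ℕ} (j : Fin κ) : outM κ (some j) = if h : j.val + 1 < κ then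
      (if j.val = 0 then {some ⟨j.val+1, h⟩, none} else {some ⟨j.val+1, h⟩})
      else {none} := rfl

lemma mem_outM {κ : ℕ} {a b : Option (Fin κ)} (h : b ∈ outM κ a) :
    ∃ j : Fin κ, a = some j ∧ ((b = none ∧ (j.val = 0 ∨ j.val + 1 = κ)) ∨
      (∃ j' : Fin κ, b = some j' ∧ j'.val = j.val + 1)) := by
  match a with
  | none => simp [outM] at h
  | some j =>
    refine ⟨j, rfl, ?_⟩
    rw [outM_some] at h
    split at h
    · rename_i h1
      split at h
      · rename_i h0
        simp only [Finset.mem_insert, Finset.mem_singleton] at h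
        rcases h with h | h
        · exact Or.inr ⟨_, h, rfl⟩
        · exact Or.inl ⟨h, Or.inl h0⟩
      · simp only [Finset.mem_singleton] at h
        exact Or.inr ⟨_, h, rfl⟩
    · rename_i h1
      simp only [Finset.mem_singleton] at h
      have : j.val + 1 = κ := by omega
      exact Or.inl ⟨h, Or.inr this⟩

lemma outM_none (κ : ℕ) : outM κ none = ∅ := rfl

lemma none_mem_outM_zero {κ : ℕ} (j : Fin κ) (hj : j.val = 0) : none ∈ outM κ (some j) := by
  rw [outM_some]
  split <;> simp [hj]

lemma outM_ne {κ : ℕ} {a b : Option (Fin κ)} (h : b ∈ outM κ a) : b ≠ a := by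
  obtain ⟨j, rfl, h2⟩ := mem_outM h
  rcases h2 with ⟨rfl, _⟩ | ⟨j', rfl, hj'⟩
  · simp
  · simp only [ne_eq, Option.some_inj]
    intro he; rw [he] at hj'; omega

lemma outM_antisymm {κ : ℕ} {a b : Option (Fin κ)} (h1 : b ∈ outM κ a) (h2 : a ∈ outM κ b) :
    False := by
  obtain ⟨j, rfl, hx⟩ := mem_outM h1
  obtain ⟨j', he, h'⟩ := mem_outM h2
  rcases hx with ⟨rfl, _⟩ | ⟨j2, rfl, hj2⟩
  · simp at he
  · rcases h' with ⟨h0, _⟩ | ⟨j3, h3, hj3⟩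
    · simp at h0
    · rw [Option.some_inj] at he h3
      subst he; subst h3; omega

/-! ### The flower graph -/

def kf (l i : ℕ) : ℕ := if i < 5 then (if i < l then 1 else 4) else 6

lemma kf_cases (l i : ℕ) : kf l i = 1 ∨ kf l i = 4 ∨ kf l i = 6 := by
  unfold kf; split
  · split
    · exact Or.inl rfl
    · exact Or.inr (Or.inl rfl)
  · exact Or.inr (Or.inr rfl)

lemma kf_pos (l i : ℕ) : 0 < kf l i := by rcases kf_cases l i with h | h | h <;> omega

abbrev PT (l s : ℕ) := Σ i : Fin (5+s), Fin (kf l i.val)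
abbrev VT (l s : ℕ) := Option (PT l s)

variable {l s : ℕ}

def ι (l s : ℕ) (i : Fin (5+s)) : Option (Fin (kf l i.val)) → VT l s :=
  Option.map (fun j => (⟨i, j⟩ : PT l s))

lemma ι_injective (i : Fin (5+s)) : Function.Injective (ι l s i) := by
  intro a b h
  cases a <;> cases b <;> simp_all [ι]

def outV (l s : ℕ) : VT l s → Finset (VT l s) :=
  fun v => v.elim ∅ (fun p => (outM (kf l p.1.val) (some p.2)).image (ι l s p.1))

lemma outV_ι (i : Fin (5+s)) (a : Option (Fin (kf l i.val))) :
    outV l s (ι l s i a) = (outM (kf l i.val) a).image (ι l s i) := by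
  cases a with
  | none => simp [outV, ι, outM]
  | some j => rfl

lemma mem_outV_decomp {u v : VT l s} (h : u ∈ outV l s v) :
    ∃ (i : Fin (5+s)) (a b : Option (Fin (kf l i.val))),
      v = ι l s i a ∧ u = ι l s i b ∧ b ∈ outM (kf l i.val) a := by
  match v with
  | none => simp [outV] at h
  | some ⟨i, j⟩ =>
    simp only [outV, Option.elim, Finset.mem_image] at h
    obtain ⟨b, hb, rfl⟩ := h
    exact ⟨i, some j, b, rfl, rfl, hb⟩

lemma outV_ne {u v : VT l s} (h : u ∈ outV l s v) : u ≠ v := by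
  obtain ⟨i, a, b, rfl, rfl, hb⟩ := mem_outV_decomp h
  intro he
  exact outM_ne hb (ι_injective i he)

lemma outV_antisymm {u v : VT l s} (h1 : u ∈ outV l s v) (h2 : v ∈ outV l s u) : False := by
  obtain ⟨i, a, b, rfl, rfl, hb⟩ := mem_outV_decomp h1
  rw [outV_ι, Finset.mem_image] at h2
  obtain ⟨w, hw, hwe⟩ := h2
  have : w = a := ι_injective i hwe
  subst this
  exact outM_antisymm hb hw

def GG (l s : ℕ) : SimpleGraph (VT l s) := SimpleGraph.fromRel (fun x y => y ∈ outV l s x)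

lemma GG_adj {x y : VT l s} :
    (GG l s).Adj x y ↔ x ≠ y ∧ (y ∈ outV l s x ∨ x ∈ outV l s y) := by
  rw [GG, SimpleGraph.fromRel_adj]

lemma GG_adj_piece {i : Fin (5+s)} {a b : Option (Fin (kf l i.val))} :
    (GG l s).Adj (ι l s i a) (ι l s i b) ↔
      a ≠ b ∧ (b ∈ outM (kf l i.val) a ∨ a ∈ outM (kf l i.val) b) := by
  rw [GG_adj]
  constructor
  · rintro ⟨hne, h | h⟩
    · rw [outV_ι, Finset.mem_image] at h
      obtain ⟨w, hw, hwe⟩ := h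
      have : w = b := ι_injective i hwe
      subst this
      exact ⟨fun he => hne (congrArg _ he), Or.inl hw⟩
    · rw [outV_ι, Finset.mem_image] at h
      obtain ⟨w, hw, hwe⟩ := h
      have : w = a := ι_injective i hwe
      subst this
      exact ⟨fun he => hne (congrArg _ he), Or.inr hw⟩
  · rintro ⟨hne, h | h⟩
    · exact ⟨fun he => hne (ι_injective i he),
        Or.inl (by rw [outV_ι, Finset.mem_image]; exact ⟨b, h, rfl⟩)⟩
    · exact ⟨fun he => hne (ι_injective i he),
        Or.inr (by rw [outV_ι, Finset.mem_image]; exact ⟨a, h, rfl⟩)⟩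

lemma GG_adj_locality {x y : VT l s} (h : (GG l s).Adj x y) :
    ∃ (i : Fin (5+s)) (a b : Option (Fin (kf l i.val))),
      x = ι l s i a ∧ y = ι l s i b ∧ (a ≠ b) ∧
      (b ∈ outM (kf l i.val) a ∨ a ∈ outM (kf l i.val) b) := by
  rw [GG_adj] at h
  obtain ⟨hne, h | h⟩ := h
  · obtain ⟨i, a, b, rfl, rfl, hb⟩ := mem_outV_decomp h
    exact ⟨i, a, b, rfl, rfl, fun he => hne (congrArg (ι l s i) he), Or.inl hb⟩
  · obtain ⟨i, a, b, hy, hx, hb⟩ := mem_outV_decomp h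
    exact ⟨i, b, a, hx, hy,
      fun he => hne (hx.trans ((congrArg (ι l s i) he).trans hy.symm)), Or.inr hb⟩

/-! ### counting machinery -/

instance : DecidableRel (GG l s).Adj := fun _ _ => decidable_of_iff _ GG_adj.symm

lemma ncard_filter_eq {α : Type*} [Fintype α] [DecidableEq α] (A : Finset α) (P : α → Prop)
    [DecidablePred P] : Set.ncard {x | x ∈ A ∧ P x} = (A.filter P).card := by
  rw [← Set.ncard_coe_finset]
  congr 1
  ext x
  simp

def sideA (A : Finset (VT l s)) (i : Fin (5+s)) : Finset (Fin (kf l i.val)) :=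
  Finset.univ.filter (fun j => (some ⟨i,j⟩ : VT l s) ∈ A)

def sideT (A : Finset (VT l s)) (i : Fin (5+s)) : Finset (Option (Fin (kf l i.val))) :=
  Finset.univ.filter (fun b => ι l s i b ∈ A)

lemma none_mem_sideT {A : Finset (VT l s)} {i : Fin (5+s)} :
    none ∈ sideT A i ↔ none ∈ A := by rw [sideT, Finset.mem_filter]; simp [ι]

lemma some_mem_sideT {A : Finset (VT l s)} {i : Fin (5+s)} {j : Fin (kf l i.val)} :
    some j ∈ sideT A i ↔ (some ⟨i,j⟩ : VT l s) ∈ A := by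
    rw [sideT, Finset.mem_filter]; simp [ι]

lemma sideT_erase_none {A : Finset (VT l s)} {i : Fin (5+s)} :
    (sideT A i).erase none = (sideA A i).image some := by
  ext b
  cases b with
  | none => simp
  | some j => simp [sideA, some_mem_sideT]

lemma sideT_erase_card {A : Finset (VT l s)} {i : Fin (5+s)} :
    ((sideT A i).erase none).card = (sideA A i).card := by
  rw [sideT_erase_none, Finset.card_image_of_injective _ (Option.some_injective _)]

def sideP (A : Finset (VT l s)) : Finset (PT l s) := Finset.univ.filter (fun p => some p ∈ A)

lemma sideP_sigma (A : Finset (VT l s)) :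
    sideP A = Finset.univ.sigma (fun i => sideA A i) := by
  ext ⟨i, j⟩
  simp [sideP, sideA]

lemma erase_none_eq (A : Finset (VT l s)) :
    A.erase none = (sideP A).map ⟨some, Option.some_injective _⟩ := by
  ext v
  cases v with
  | none => simp
  | some p => simp [sideP]

lemma sum_erase_none {M : Type*} [AddCommMonoid M] (A : Finset (VT l s)) (g : VT l s → M) :
    ∑ v ∈ A.erase none, g v = ∑ i : Fin (5+s), ∑ j ∈ sideA A i, g (some ⟨i, j⟩) := by
  rw [erase_none_eq, Finset.sum_map, sideP_sigma, Finset.sum_sigma]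
  rfl

lemma card_decomp (A : Finset (VT l s)) :
    A.card = (if none ∈ A then 1 else 0) + ∑ i : Fin (5+s), (sideA A i).card := by
  have h1 : (A.erase none).card = ∑ i : Fin (5+s), (sideA A i).card := by
    rw [erase_none_eq, Finset.card_map, sideP_sigma, Finset.card_sigma]
  by_cases hc : none ∈ A
  · rw [if_pos hc, ← h1, ← Finset.card_erase_add_one hc]
    omega
  · rw [if_neg hc, ← h1, Finset.erase_eq_of_notMem hc]
    omega

lemma edgesWithin_GG (A : Finset (VT l s)) :
    edgesWithin (GG l s) A = ∑ v ∈ A.erase none, ((outV l s v).filter (· ∈ A)).card := by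
  classical
  set F := (A.erase none).biUnion
    (fun v => ((outV l s v).filter (· ∈ A)).image (fun w => s(v, w))) with hF
  have hset : {e : Sym2 (VT l s) | e ∈ (GG l s).edgeSet ∧ ∀ x ∈ e, x ∈ A} = ↑F := by
    ext e
    refine Sym2.ind (fun x y => ?_) e
    simp only [Set.mem_setOf_eq, SimpleGraph.mem_edgeSet, Finset.coe_biUnion,
      Finset.mem_coe, Set.mem_iUnion, Finset.mem_image, Finset.mem_filter, hF,
      Finset.mem_biUnion]
    constructor
    · rintro ⟨hadj, hall⟩
      have hx : x ∈ A := hall x (by simp)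
      have hy : y ∈ A := hall y (by simp)
      rw [GG_adj] at hadj
      obtain ⟨hne, h | h⟩ := hadj
      · have hxn : x ≠ none := by
          rintro rfl
          simp [outV] at h
        exact ⟨x, Finset.mem_erase.mpr ⟨hxn, hx⟩, y, ⟨h, hy⟩, rfl⟩
      · have hyn : y ≠ none := by
          rintro rfl
          simp [outV] at h
        exact ⟨y, Finset.mem_erase.mpr ⟨hyn, hy⟩, x, ⟨h, hx⟩, Sym2.eq_swap⟩
    · rintro ⟨v, hv, w, ⟨hw, hwA⟩, he⟩
      have hvA : v ∈ A := (Finset.mem_erase.mp hv).2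
      have hadj : (GG l s).Adj v w := GG_adj.mpr ⟨(outV_ne hw).symm, Or.inl hw⟩
      have hxy : s(x, y) = s(v, w) := he.symm
      rcases Sym2.eq_iff.mp hxy with ⟨rfl, rfl⟩ | ⟨rfl, rfl⟩
      · exact ⟨hadj, by
          intro z hz
          rcases Sym2.mem_iff.mp hz with rfl | rfl
          exacts [hvA, hwA]⟩
      · exact ⟨hadj.symm, by
          intro z hz
          rcases Sym2.mem_iff.mp hz with rfl | rfl
          exacts [hwA, hvA]⟩
  rw [edgesWithin, hset, Set.ncard_coe_finset, hF, Finset.card_biUnion]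
  · refine Finset.sum_congr rfl (fun v hv => ?_)
    have hinj : Function.Injective (fun w : VT l s => s(v, w)) := by
      intro w w' h
      rcases Sym2.eq_iff.mp h with ⟨_, h2⟩ | ⟨h1, h2⟩
      · exact h2
      · exact h2.trans h1
    rw [Finset.card_image_of_injective _ hinj]
  · intro v hv v' hv' hne
    refine Finset.disjoint_left.mpr ?_
    rintro e he1 he2
    simp only [Finset.mem_image, Finset.mem_filter] at he1 he2
    obtain ⟨w, ⟨hw, _⟩, rfl⟩ := he1
    obtain ⟨w', ⟨hw', _⟩, he⟩ := he2
    rcases Sym2.eq_iff.mp he with ⟨h1, h2⟩ | ⟨h1, h2⟩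
    · exact hne h1.symm
    · subst h1; subst h2
      exact outV_antisymm hw hw'

/-! ### adjacency and degrees -/

def Madj (κ : ℕ) (a b : Option (Fin κ)) : Prop := b ∈ outM κ a ∨ a ∈ outM κ b

instance {κ : ℕ} : DecidableRel (Madj κ) := fun _ _ => by unfold Madj; infer_instance

lemma madj_ne {κ : ℕ} {a b : Option (Fin κ)} (h : Madj κ a b) : a ≠ b := by
  rcases h with h | h
  · exact (outM_ne h).symm
  · exact outM_ne h

lemma GG_adj_iota {i : Fin (5+s)} {a b : Option (Fin (kf l i.val))} :
    (GG l s).Adj (ι l s i a) (ι l s i b) ↔ Madj (kf l i.val) a b := by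
  rw [GG_adj_piece]
  unfold Madj
  constructor
  · exact fun h => h.2
  · exact fun h => ⟨madj_ne h, h⟩

lemma adj_some_iff {i : Fin (5+s)} {j : Fin (kf l i.val)} {u : VT l s} :
    (GG l s).Adj (some ⟨i, j⟩) u ↔
      ∃ b, Madj (kf l i.val) (some j) b ∧ u = ι l s i b := by
  constructor
  · intro h
    rw [GG_adj] at h
    obtain ⟨hne, h | h⟩ := h
    · have : u ∈ (outM (kf l i.val) (some j)).image (ι l s i) := by
        rw [← outV_ι]; exact h
      rw [Finset.mem_image] at this
      obtain ⟨b, hb, rfl⟩ := this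
      exact ⟨b, Or.inl hb, rfl⟩
    · match u with
      | none => simp [outV] at h
      | some ⟨i2, j2⟩ =>
        simp only [outV, Option.elim, Finset.mem_image] at h
        obtain ⟨b, hb, hbe⟩ := h
        match b with
        | none => simp [ι] at hbe
        | some jb =>
          simp only [ι, Option.map_some] at hbe
          rw [Option.some_inj] at hbe
          obtain ⟨rfl, hj⟩ := Sigma.mk.inj_iff.mp hbe
          have : jb = j := eq_of_heq hj
          subst this
          exact ⟨some j2, Or.inr hb, rfl⟩
  · rintro ⟨b, hb, rfl⟩
    exact GG_adj_iota.mpr hb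

lemma ncard_setOf {α : Type*} [Fintype α] (P : α → Prop) [DecidablePred P] :
    Set.ncard {x | P x} = (Finset.univ.filter P).card := by
  rw [← Set.ncard_coe_finset]
  congr 1
  ext x
  simp

def degMf (κ : ℕ) (a : Option (Fin κ)) : ℕ := (Finset.univ.filter (Madj κ a)).card

lemma deg_some (i : Fin (5+s)) (j : Fin (kf l i.val)) :
    deg (GG l s) (some ⟨i, j⟩) = degMf (kf l i.val) (some j) := by
  classical
  rw [deg, ncard_setOf]
  have : Finset.univ.filter ((GG l s).Adj (some ⟨i, j⟩)) =
      (Finset.univ.filter (Madj (kf l i.val) (some j))).image (ι l s i) := by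
    ext u
    simp only [Finset.mem_filter, Finset.mem_univ, true_and, Finset.mem_image, adj_some_iff]
    constructor
    · rintro ⟨b, hb, rfl⟩; exact ⟨b, hb, rfl⟩
    · rintro ⟨b, hb, rfl⟩; exact ⟨b, hb, rfl⟩
  rw [this, Finset.card_image_of_injective _ (ι_injective i), degMf]

lemma degMf_val {κ : ℕ} (hκ : κ = 1 ∨ κ = 4 ∨ κ = 6) (j : Fin κ) :
    degMf κ (some j) = if κ = 1 then 1 else 2 := by
  rcases hκ with rfl | rfl | rfl <;> revert j <;> decide

lemma deg_some_val (i : Fin (5+s)) (j : Fin (kf l i.val)) :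
    deg (GG l s) (some ⟨i, j⟩) = if kf l i.val = 1 then 1 else 2 := by
  rw [deg_some, degMf_val (kf_cases l i.val)]

lemma deg_none_ne_one : deg (GG l s) none ≠ 1 := by
  intro h
  rw [deg] at h
  obtain ⟨a, ha⟩ := Set.ncard_eq_one.mp h
  have h0 : ∀ i : Fin (5+s), (GG l s).Adj none (some ⟨i, ⟨0, kf_pos l i.val⟩⟩) := by
    intro i
    rw [GG_adj]
    refine ⟨by simp, Or.inr ?_⟩
    have : (some ⟨i, ⟨0, kf_pos l i.val⟩⟩ : VT l s) = ι l s i (some ⟨0, kf_pos l i.val⟩) := rfl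
    rw [this, outV_ι, Finset.mem_image]
    exact ⟨none, none_mem_outM_zero _ rfl, rfl⟩
  have m0 : (some ⟨⟨0, by omega⟩, ⟨0, kf_pos l 0⟩⟩ : VT l s) ∈ {u | (GG l s).Adj none u} :=
    h0 ⟨0, by omega⟩
  have m1 : (some ⟨⟨1, by omega⟩, ⟨0, kf_pos l 1⟩⟩ : VT l s) ∈ {u | (GG l s).Adj none u} :=
    h0 ⟨1, by omega⟩
  rw [ha] at m0 m1
  have := m0.trans m1.symm
  simp only [Option.some_inj] at this
  have h2 := congrArg (fun p : PT l s => (p.1 : ℕ)) this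
  simp at h2

/-! ### sums over pieces -/

lemma kf_ge5 (l i : ℕ) (h : 5 ≤ i) : kf l i = 6 := by unfold kf; rw [if_neg (by omega)]

lemma kSum {M : Type*} [AddCommMonoid M] (hl : l ≤ 5) (g : ℕ → M) :
    ∑ i : Fin (5+s), g (kf l i.val) = l • g 1 + (5 - l) • g 4 + s • g 6 := by
  induction s with
  | zero =>
    rw [Fin.sum_univ_eq_sum_range (fun i => g (kf l i)) 5]
    interval_cases l <;>
      simp [Finset.sum_range_succ, kf] <;> abel
  | succ s ih =>
    rw [Fin.sum_univ_eq_sum_range (fun i => g (kf l i)) (5+(s+1)),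
      show 5 + (s+1) = (5+s) + 1 by omega, Finset.sum_range_succ,
      ← Fin.sum_univ_eq_sum_range (fun i => g (kf l i)) (5+s), ih,
      kf_ge5 l (5+s) (by omega), succ_nsmul]
    abel

lemma V1count_GG (hl : l ≤ 5) : V1count (GG l s) = l := by
  have hset : {v : VT l s | deg (GG l s) v = 1} =
      ↑((Finset.univ.filter (fun p : PT l s => kf l p.1.val = 1)).map
        ⟨some, Option.some_injective _⟩) := by
    ext v
    cases v with
    | none =>
      simp only [Set.mem_setOf_eq, Finset.coe_map, Set.mem_image, Finset.mem_coe,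
        Function.Embedding.coeFn_mk]
      constructor
      · intro h; exact absurd h deg_none_ne_one
      · rintro ⟨p, _, h⟩; simp at h
    | some p =>
      obtain ⟨i, j⟩ := p
      simp only [Set.mem_setOf_eq, Finset.coe_map, Set.mem_image, Finset.mem_coe,
        Function.Embedding.coeFn_mk, deg_some_val]
      constructor
      · intro h
        refine ⟨⟨i, j⟩, ?_, rfl⟩
        simp only [Finset.mem_filter, Finset.mem_univ, true_and]
        by_contra hne
        rw [if_neg hne] at h
        omega
      · rintro ⟨q, hq, he⟩
        rw [Option.some_inj] at he
        subst he
        simp only [Finset.mem_filter] at hq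
        rw [if_pos hq.2]
  rw [V1count, hset, Set.ncard_coe_finset, Finset.card_map]
  have hsig : Finset.univ.filter (fun p : PT l s => kf l p.1.val = 1) =
      Finset.univ.sigma (fun i => Finset.univ.filter (fun _ => kf l i.val = 1)) := by
    ext ⟨i, j⟩
    by_cases h : kf l i.val = 1 <;> simp [h]
  rw [hsig, Finset.card_sigma]
  have hterm : ∀ i : Fin (5+s),
      (Finset.univ.filter (fun _ : Fin (kf l i.val) => kf l i.val = 1)).card
        = (fun κ => if κ = 1 then κ else 0) (kf l i.val) := by
    intro i
    simp only [Finset.filter_const]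
    split
    · rename_i h
      simp [h]
    · simp
  rw [Finset.sum_congr rfl (fun i _ => hterm i),
    kSum hl (fun κ => if κ = 1 then κ else 0)]
  simp

/-! ### edge decomposition -/

def emodel (κ : ℕ) (T : Finset (Option (Fin κ))) : ℕ :=
  ∑ v ∈ T.erase none, ((outM κ v).filter (· ∈ T)).card

lemma edgesWithin_decomp (A : Finset (VT l s)) :
    edgesWithin (GG l s) A = ∑ i : Fin (5+s), emodel (kf l i.val) (sideT A i) := by
  rw [edgesWithin_GG, sum_erase_none]
  refine Finset.sum_congr rfl (fun i _ => ?_)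
  rw [emodel, sideT_erase_none,
    Finset.sum_image (fun x _ y _ h => Option.some_injective _ h)]
  refine Finset.sum_congr rfl (fun j hj => ?_)
  rw [show outV l s (some ⟨i, j⟩) = (outM (kf l i.val) (some j)).image (ι l s i) from rfl,
    Finset.filter_image, Finset.card_image_of_injective _ (ι_injective i)]
  congr 1
  refine Finset.filter_congr (fun b _ => ?_)
  simp [sideT]

/-! ### rho decomposition -/

def lcount (κ : ℕ) (T : Finset (Option (Fin κ))) : ℕ :=
  if κ = 1 then (T.erase none).card else 0

def rhoM (κ : ℕ) (T : Finset (Option (Fin κ))) : ℤ :=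
  6 * (emodel κ T : ℤ) - 7 * ((T.erase none).card : ℤ) + 3 * (lcount κ T : ℤ)

lemma leafcount_decomp (A : Finset (VT l s)) :
    Set.ncard {v | v ∈ A ∧ deg (GG l s) v = 1}
      = ∑ i : Fin (5+s), lcount (kf l i.val) (sideT A i) := by
  classical
  rw [ncard_filter_eq A (fun v => deg (GG l s) v = 1)]
  have h1 : A.filter (fun v => deg (GG l s) v = 1)
      = (A.erase none).filter (fun v => deg (GG l s) v = 1) := by
    ext v
    cases v with
    | none => simp [deg_none_ne_one]
    | some p => simp
  rw [h1, Finset.card_filter, sum_erase_none]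
  refine Finset.sum_congr rfl (fun i _ => ?_)
  by_cases h : kf l i.val = 1
  · simp only [deg_some_val, h, if_pos, lcount, sideT_erase_card]
    simp
  · simp only [deg_some_val, if_neg h, lcount]
    simp [h]

lemma rhoA_decomp (A : Finset (VT l s)) :
    rhoA (GG l s) 3 A
      = (if none ∈ A then -7 else 0) + ∑ i : Fin (5+s), rhoM (kf l i.val) (sideT A i) := by
  have hsplit : ∑ i : Fin (5+s), rhoM (kf l i.val) (sideT A i)
      = 6 * (∑ i : Fin (5+s), (emodel (kf l i.val) (sideT A i) : ℤ))
        - 7 * (∑ i : Fin (5+s), ((sideA A i).card : ℤ))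
        + 3 * (∑ i : Fin (5+s), (lcount (kf l i.val) (sideT A i) : ℤ)) := by
    rw [Finset.mul_sum, Finset.mul_sum, Finset.mul_sum, ← Finset.sum_sub_distrib,
      ← Finset.sum_add_distrib]
    refine Finset.sum_congr rfl (fun i _ => ?_)
    rw [rhoM, sideT_erase_card]
  rw [rhoA, hsplit, edgesWithin_decomp, card_decomp, leafcount_decomp]
  push_cast
  split <;> ring

lemma none_mem_sideT_iff {A : Finset (VT l s)} {i : Fin (5+s)} :
    (none ∈ sideT A i) = (none ∈ A) := by
  rw [eq_iff_iff]; exact none_mem_sideT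

set_option maxRecDepth 40000 in
lemma rhoM_le {κ : ℕ} (hκ : κ = 1 ∨ κ = 4 ∨ κ = 6) (T : Finset (Option (Fin κ))) :
    rhoM κ T ≤ if none ∈ T then (if κ = 6 then 0 else 2) else 0 := by
  rcases hκ with rfl | rfl | rfl <;> revert T <;> decide

set_option maxRecDepth 40000 in
lemma rhoM_univ {κ : ℕ} (hκ : κ = 1 ∨ κ = 4 ∨ κ = 6) :
    rhoM κ Finset.univ = if κ = 6 then 0 else 2 := by
  rcases hκ with rfl | rfl | rfl <;> decide

lemma cast_five_sub (hl : l ≤ 5) : ((5 - l : ℕ) : ℤ) = 5 - (l : ℤ) := by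
  push_cast [hl]
  ring

lemma rhoA_le (hl : l ≤ 5) (A : Finset (VT l s)) : rhoA (GG l s) 3 A ≤ 3 := by
  rw [rhoA_decomp]
  by_cases hc : none ∈ A
  · have hb : ∑ i : Fin (5+s), rhoM (kf l i.val) (sideT A i)
        ≤ ∑ i : Fin (5+s), (fun κ => if κ = 6 then (0:ℤ) else 2) (kf l i.val) := by
      refine Finset.sum_le_sum (fun i _ => ?_)
      have h := rhoM_le (kf_cases l i.val) (sideT A i)
      rwa [if_pos (none_mem_sideT.mpr hc)] at h
    rw [kSum hl (fun κ => if κ = 6 then (0:ℤ) else 2)] at hb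
    rw [if_pos hc]
    simp only [nsmul_eq_mul, cast_five_sub hl] at hb
    norm_num at hb
    omega
  · have hb : ∑ i : Fin (5+s), rhoM (kf l i.val) (sideT A i) ≤ 0 := by
      refine Finset.sum_nonpos (fun i _ => ?_)
      have h := rhoM_le (kf_cases l i.val) (sideT A i)
      rwa [if_neg (fun hmem => hc (none_mem_sideT.mp hmem))] at h
    rw [if_neg hc]
    omega

lemma sideT_univ (i : Fin (5+s)) : sideT (Finset.univ : Finset (VT l s)) i = Finset.univ := by
  ext b; simp [sideT]

lemma rhoA_univ_GG (hl : l ≤ 5) : rhoA (GG l s) 3 Finset.univ = 3 := by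
  rw [rhoA_decomp, if_pos (Finset.mem_univ _)]
  have hterm : ∀ i : Fin (5+s), rhoM (kf l i.val) (sideT (Finset.univ : Finset (VT l s)) i)
      = (fun κ => if κ = 6 then (0:ℤ) else 2) (kf l i.val) := by
    intro i
    rw [sideT_univ, rhoM_univ (kf_cases l i.val)]
  rw [Finset.sum_congr rfl (fun i _ => hterm i),
    kSum hl (fun κ => if κ = 6 then (0:ℤ) else 2)]
  simp only [nsmul_eq_mul, cast_five_sub hl]
  norm_num
  ring

lemma rhoMax_GG (hl : l ≤ 5) : rhoMax (GG l s) 3 = 3 := by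
  classical
  apply le_antisymm
  · apply Finset.max'_le
    intro y hy
    rw [Finset.mem_image] at hy
    obtain ⟨A, _, rfl⟩ := hy
    exact rhoA_le hl A
  · apply Finset.le_max'
    rw [Finset.mem_image]
    exact ⟨Finset.univ, Finset.mem_univ _, rhoA_univ_GG hl⟩

/-! ### triangle-freeness -/

lemma iota_eq_some {i i' : Fin (5+s)} {b : Option (Fin (kf l i.val))} {j' : Fin (kf l i'.val)}
    (h : ι l s i b = some ⟨i', j'⟩) :
    ∃ jb : Fin (kf l i.val), b = some jb ∧ i = i' ∧ jb.val = j'.val := by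
  match b with
  | none => simp [ι] at h
  | some jb =>
    simp only [ι, Option.map_some] at h
    rw [Option.some_inj] at h
    obtain ⟨rfl, hj⟩ := Sigma.mk.inj_iff.mp h
    exact ⟨jb, rfl, rfl, congrArg Fin.val (eq_of_heq hj)⟩

lemma adj_some_some {i i' : Fin (5+s)} {j : Fin (kf l i.val)} {j' : Fin (kf l i'.val)}
    (h : (GG l s).Adj (some ⟨i, j⟩) (some ⟨i', j'⟩)) :
    i = i' ∧ (j.val + 1 = j'.val ∨ j'.val + 1 = j.val) := by
  rw [GG_adj] at h
  obtain ⟨hne, h | h⟩ := h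
  · rw [show (some ⟨i, j⟩ : VT l s) = ι l s i (some j) from rfl, outV_ι,
      Finset.mem_image] at h
    obtain ⟨b, hb, hbe⟩ := h
    obtain ⟨jb, rfl, rfl, hval⟩ := iota_eq_some hbe
    obtain ⟨j0, hj0, hcase⟩ := mem_outM hb
    rw [Option.some_inj] at hj0
    subst hj0
    rcases hcase with ⟨hne2, _⟩ | ⟨j2, he2, hv2⟩
    · exact absurd hne2 (by simp)
    · rw [Option.some_inj] at he2
      subst he2
      exact ⟨rfl, Or.inl (by omega)⟩
  · rw [show (some ⟨i', j'⟩ : VT l s) = ι l s i' (some j') from rfl, outV_ι,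
      Finset.mem_image] at h
    obtain ⟨b, hb, hbe⟩ := h
    obtain ⟨jb, rfl, rfl, hval⟩ := iota_eq_some hbe
    obtain ⟨j0, hj0, hcase⟩ := mem_outM hb
    rw [Option.some_inj] at hj0
    subst hj0
    rcases hcase with ⟨hne2, _⟩ | ⟨j2, he2, hv2⟩
    · exact absurd hne2 (by simp)
    · rw [Option.some_inj] at he2
      subst he2
      exact ⟨rfl, Or.inr (by omega)⟩

lemma adj_none_some {i : Fin (5+s)} {j : Fin (kf l i.val)}
    (h : (GG l s).Adj none (some ⟨i, j⟩)) : j.val = 0 ∨ j.val + 1 = kf l i.val := by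
  rw [GG_adj] at h
  obtain ⟨hne, h | h⟩ := h
  · simp [outV] at h
  · rw [show (some ⟨i, j⟩ : VT l s) = ι l s i (some j) from rfl, outV_ι,
      Finset.mem_image] at h
    obtain ⟨b, hb, hbe⟩ := h
    have hbn : b = none := by
      match b with
      | none => rfl
      | some jb => simp [ι] at hbe
    subst hbn
    obtain ⟨j0, hj0, hcase⟩ := mem_outM hb
    rw [Option.some_inj] at hj0
    subst hj0
    rcases hcase with ⟨_, hc⟩ | ⟨j2, he2, _⟩
    · exact hc
    · exact absurd he2 (by simp)

lemma no_triangle {x y z : VT l s} (hxy : (GG l s).Adj x y) (hyz : (GG l s).Adj y z)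
    (hxz : (GG l s).Adj x z) : False := by
  match x, y, z with
  | none, none, _ => exact (GG l s).loopless.irrefl none hxy
  | _, none, none => exact (GG l s).loopless.irrefl none hyz
  | none, _, none => exact (GG l s).loopless.irrefl none hxz
  | none, some ⟨i, j⟩, some ⟨i', j'⟩ =>
    obtain ⟨rfl, hd⟩ := adj_some_some hyz
    have h1 := adj_none_some hxy
    have h2 := adj_none_some hxz
    rcases kf_cases l i.val with h | h | h <;> omega
  | some ⟨i, j⟩, none, some ⟨i', j'⟩ =>
    obtain ⟨rfl, hd⟩ := adj_some_some hxz
    have h1 := adj_none_some hxy.symm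
    have h2 := adj_none_some hyz
    rcases kf_cases l i.val with h | h | h <;> omega
  | some ⟨i, j⟩, some ⟨i', j'⟩, none =>
    obtain ⟨rfl, hd⟩ := adj_some_some hxy
    have h1 := adj_none_some hxz.symm
    have h2 := adj_none_some hyz.symm
    rcases kf_cases l i.val with h | h | h <;> omega
  | some ⟨i1, j1⟩, some ⟨i2, j2⟩, some ⟨i3, j3⟩ =>
    obtain ⟨rfl, h12⟩ := adj_some_some hxy
    obtain ⟨rfl, h23⟩ := adj_some_some hyz
    obtain ⟨_, h13⟩ := adj_some_some hxz
    omega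

lemma GG_cliqueFree : (GG l s).CliqueFree 3 := by
  intro S hS
  rw [SimpleGraph.is3Clique_iff] at hS
  obtain ⟨x, y, z, hxy, hxz, hyz, rfl⟩ := hS
  exact no_triangle hxy hyz hxz

/-! ### no equitable coloring -/

lemma card_VT (hl : l ≤ 5) : Fintype.card (VT l s) + 3*l = 21 + 6*s := by
  have h1 : Fintype.card (VT l s) = 1 + Fintype.card (PT l s) := by
    rw [Fintype.card_option]
    omega
  have h2 : Fintype.card (PT l s) = ∑ i : Fin (5+s), kf l i.val := by
    rw [Fintype.card_sigma]
    exact Finset.sum_congr rfl (fun i _ => Fintype.card_fin _)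
  rw [h1, h2, kSum hl (fun κ => κ)]
  simp only [smul_eq_mul]
  omega

set_option maxRecDepth 40000 in
lemma colM_bound {κ : ℕ} (hκ : κ = 1 ∨ κ = 4 ∨ κ = 6) (S : Finset (Fin κ))
    (h1 : ∀ a ∈ S, ∀ b ∈ S, ¬ Madj κ (some a) (some b))
    (h2 : ∀ a ∈ S, ¬ Madj κ none (some a)) :
    S.card ≤ (if κ = 6 then 2 else if κ = 4 then 1 else 0) := by
  rcases hκ with rfl | rfl | rfl <;> revert S <;> decide

lemma no_equitable_GG (hl : l ≤ 5) : ¬ HasEquitableColoring (GG l s) 3 := by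
  classical
  rintro ⟨f, hprop, hbal⟩
  set K := Finset.univ.filter (fun v : VT l s => f v = f none) with hK
  have hnoneK : none ∈ K := by simp [hK]
  have hmemK : ∀ v : VT l s, v ∈ K ↔ f v = f none := by
    intro v; simp [hK]
  have hsideK : ∀ (i : Fin (5+s)) (a : Fin (kf l i.val)),
      a ∈ sideA K i → f (some ⟨i, a⟩) = f none := by
    intro i a ha
    rw [sideA, Finset.mem_filter] at ha
    exact (hmemK _).mp ha.2
  -- per-piece bound
  have hside : ∀ i : Fin (5+s), (sideA K i).card
      ≤ (fun κ => if κ = 6 then 2 else if κ = 4 then 1 else 0) (kf l i.val) := by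
    intro i
    refine colM_bound (kf_cases l i.val) _ ?_ ?_
    · intro a ha b hb hmadj
      have hadj : (GG l s).Adj (some ⟨i, a⟩) (some ⟨i, b⟩) := GG_adj_iota.mpr hmadj
      exact hprop hadj ((hsideK i a ha).trans (hsideK i b hb).symm)
    · intro a ha hmadj
      have hadj : (GG l s).Adj none (some ⟨i, a⟩) := GG_adj_iota.mpr hmadj
      exact hprop hadj ((hsideK i a ha).symm)
  -- size of K
  have hKcard : K.card ≤ 1 + ((5 - l) * 1 + s * 2) := by
    rw [card_decomp K, if_pos hnoneK]
    have hb := Finset.sum_le_sum (fun i (_ : i ∈ Finset.univ) => hside i)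
    rw [kSum hl (fun κ => if κ = 6 then 2 else if κ = 4 then 1 else 0)] at hb
    simp only [smul_eq_mul] at hb
    norm_num at hb
    omega
  -- total count
  have hsum : ∑ c : Fin 3, (Finset.univ.filter (fun v : VT l s => f v = c)).card
      = Fintype.card (VT l s) := by
    rw [← Finset.card_univ]
    exact (Finset.card_eq_sum_card_fiberwise (fun v _ => Finset.mem_univ (f v))).symm
  rw [Fin.sum_univ_three] at hsum
  have hcV := card_VT (s := s) hl
  have hb0 := hbal 0 (f none)
  have hb1 := hbal 1 (f none)
  have hb2 := hbal 2 (f none)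
  have h3 : ∀ c : Fin 3, c = 0 ∨ c = 1 ∨ c = 2 := by decide
  have hKn : K.card = (Finset.univ.filter (fun v : VT l s => f v = f none)).card := rfl
  rcases h3 (f none) with hc | hc | hc <;> rw [hc] at hKn hb0 hb1 hb2 <;> omega

/-! ### transfer along an equivalence -/

section Transfer
set_option linter.unusedSectionVars false

variable {α β : Type*} [Fintype α] [DecidableEq α] [Fintype β] [DecidableEq β]
variable (e : α ≃ β) (G : SimpleGraph β)

lemma comap_adj' {x y : α} : (G.comap (e : α → β)).Adj x y ↔ G.Adj (e x) (e y) := Iff.rfl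

lemma deg_comap (x : α) : deg (G.comap (e : α → β)) x = deg G (e x) := by
  rw [deg, deg]
  have hset : {u : α | G.Adj (e x) (e u)} = (e : α → β) ⁻¹' {w | G.Adj (e x) w} := rfl
  rw [show {u : α | (G.comap (e : α → β)).Adj x u} = (e : α → β) ⁻¹' {w | G.Adj (e x) w} from rfl]
  exact Set.ncard_preimage_of_injective_subset_range e.injective
    (by rw [Equiv.range_eq_univ]; exact Set.subset_univ _)

lemma V1count_comap : V1count (G.comap (e : α → β)) = V1count G := by
  rw [V1count, V1count]
  have hset : {v : α | deg (G.comap (e : α → β)) v = 1}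
      = (e : α → β) ⁻¹' {w | deg G w = 1} := by
    ext v
    simp [deg_comap]
  rw [hset]
  exact Set.ncard_preimage_of_injective_subset_range e.injective
    (by rw [Equiv.range_eq_univ]; exact Set.subset_univ _)

lemma cliqueFree_comap (h : G.CliqueFree 3) : (G.comap (e : α → β)).CliqueFree 3 :=
  h.comap (SimpleGraph.Embedding.comap e.toEmbedding G).isContained

lemma edgesWithin_comap (A : Finset α) :
    edgesWithin (G.comap (e : α → β)) A = edgesWithin G (A.image e) := by
  rw [edgesWithin, edgesWithin]
  have hset : {E : Sym2 α | E ∈ (G.comap (e : α → β)).edgeSet ∧ ∀ v ∈ E, v ∈ A}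
      = (Sym2.map (e : α → β)) ⁻¹' {E : Sym2 β | E ∈ G.edgeSet ∧ ∀ v ∈ E, v ∈ A.image e} := by
    ext E
    refine Sym2.ind (fun x y => ?_) E
    simp only [Set.mem_preimage, Sym2.map_pair_eq, Set.mem_setOf_eq,
      SimpleGraph.mem_edgeSet, comap_adj']
    constructor
    · rintro ⟨hadj, hall⟩
      refine ⟨hadj, ?_⟩
      intro w hw
      rcases Sym2.mem_iff.mp hw with rfl | rfl
      · exact Finset.mem_image_of_mem _ (hall x (by simp))
      · exact Finset.mem_image_of_mem _ (hall y (by simp))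
    · rintro ⟨hadj, hall⟩
      refine ⟨hadj, ?_⟩
      intro z hz
      have hz' : e z ∈ A.image e := by
        rcases Sym2.mem_iff.mp hz with rfl | rfl
        · exact hall (e z) (by simp)
        · exact hall (e z) (by simp)
      rw [Finset.mem_image] at hz'
      obtain ⟨u, hu, hue⟩ := hz'
      rwa [← e.injective hue]
  rw [hset]
  exact Set.ncard_preimage_of_injective_subset_range (Sym2.map.injective e.injective)
    (by
      intro E _
      refine Sym2.ind (fun x y => ?_) E
      exact ⟨s(e.symm x, e.symm y), by simp [Sym2.map_pair_eq]⟩)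

lemma rhoA_comap (k : ℕ) (A : Finset α) :
    rhoA (G.comap (e : α → β)) k A = rhoA G k (A.image e) := by
  rw [rhoA, rhoA, edgesWithin_comap, Finset.card_image_of_injective _ e.injective]
  have hset : {v : α | v ∈ A ∧ deg (G.comap (e : α → β)) v = 1}
      = (e : α → β) ⁻¹' {w : β | w ∈ A.image e ∧ deg G w = 1} := by
    ext v
    simp only [Set.mem_setOf_eq, Set.mem_preimage, deg_comap]
    constructor
    · rintro ⟨h1, h2⟩
      exact ⟨Finset.mem_image_of_mem _ h1, h2⟩
    · rintro ⟨h1, h2⟩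
      rw [Finset.mem_image] at h1
      obtain ⟨u, hu, hue⟩ := h1
      exact ⟨by rwa [← e.injective hue], h2⟩
  rw [hset, Set.ncard_preimage_of_injective_subset_range e.injective
    (by rw [Equiv.range_eq_univ]; exact Set.subset_univ _)]

lemma rhoMax_comap (k : ℕ) : rhoMax (G.comap (e : α → β)) k = rhoMax G k := by
  have himg : (Finset.univ : Finset (Finset α)).image (rhoA (G.comap (e : α → β)) k)
      = (Finset.univ : Finset (Finset β)).image (rhoA G k) := by
    ext r
    simp only [Finset.mem_image, Finset.mem_univ, true_and]
    constructor
    · rintro ⟨A, rfl⟩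
      exact ⟨A.image e, (rhoA_comap e G k A).symm⟩
    · rintro ⟨B, rfl⟩
      refine ⟨B.image e.symm, ?_⟩
      rw [rhoA_comap, Finset.image_image]
      congr 1
      ext w
      simp
  rw [rhoMax, rhoMax]
  congr 1

lemma no_equitable_comap (h : ¬ HasEquitableColoring G 3) :
    ¬ HasEquitableColoring (G.comap (e : α → β)) 3 := by
  rintro ⟨f, hprop, hbal⟩
  refine h ⟨f ∘ e.symm, ?_, ?_⟩
  · intro u v hadj
    have : (G.comap (e : α → β)).Adj (e.symm u) (e.symm v) := by
      rw [comap_adj', e.apply_symm_apply, e.apply_symm_apply]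
      exact hadj
    exact hprop this
  · intro c₁ c₂
    have hcards : ∀ c : Fin 3, (Finset.univ.filter fun w : β => (f ∘ e.symm) w = c).card
        = (Finset.univ.filter fun v : α => f v = c).card := by
      intro c
      apply Finset.card_bij (fun (w : β) _ => e.symm w)
      · intro w hw
        simp only [Finset.mem_filter, Finset.mem_univ, true_and] at hw ⊢
        exact hw
      · intro w1 h1 w2 h2 hee
        exact e.symm.injective hee
      · intro v hv
        refine ⟨e v, ?_, by simp⟩
        simp only [Finset.mem_filter, Finset.mem_univ, true_and, Function.comp_apply,
          e.symm_apply_apply] at hv ⊢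
        exact hv
    rw [hcards c₁, hcards c₂]
    exact hbal c₁ c₂

end Transfer

end Stmt4Aux

/-- For every `n` and every `l ∈ {0,…,5}` there is a triangle-free finite
simple graph `G` with `|G| > n`, exactly `l` vertices of degree 1, `ρ_G^3 = 3`, and no
equitable 3-coloring. -/
theorem stmt4 (n l : ℕ) (hl : l ≤ 5) :
    ∃ (m : ℕ) (G : SimpleGraph (Fin m)),
      n < m ∧
      G.CliqueFree 3 ∧
      V1count G = l ∧
      rhoMax G 3 = 3 ∧
      ¬ HasEquitableColoring G 3 := by
  classical
  set s := n + 1 with hs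
  set e := (Fintype.equivFin (Stmt4Aux.VT l s)).symm with he
  refine ⟨Fintype.card (Stmt4Aux.VT l s),
    (Stmt4Aux.GG l s).comap (e : Fin (Fintype.card (Stmt4Aux.VT l s)) → Stmt4Aux.VT l s),
    ?_, ?_, ?_, ?_, ?_⟩
  · have := Stmt4Aux.card_VT (l := l) (s := s) hl
    omega
  · exact Stmt4Aux.cliqueFree_comap e _ Stmt4Aux.GG_cliqueFree
  · rw [Stmt4Aux.V1count_comap e]
    exact Stmt4Aux.V1count_GG hl
  · rw [Stmt4Aux.rhoMax_comap e]
    exact Stmt4Aux.rhoMax_GG hl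
  · exact Stmt4Aux.no_equitable_comap e _ (Stmt4Aux.no_equitable_GG hl)
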